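/- Let c, b_1, …, b_N : Fin n → ℝ be random variables on Ω such that the family {c, b_1, …, b_N} is mutually independent under P and each b_i is non-constant. Let p denote the number of distinct values taken by c and, for each i, let n(b_i) denote the number of distinct values taken by b_i. Then p · ∏_{i=1}^N n(b_i) ≤ n. -/

import Mathlib

open MeasureTheory

/-- On the finite probability space `Fin n` with `P {i} = p i`,
if `{c, b 1, …, b N}` is mutually independent (for every choice of one level
set of each variable, the probability of the intersection equals the product of
the probabilities) and each `b i` is non-constant, then the number of distinct
values of `c` times the product of the numbers of distinct values of the `b i`
is at most `n`. -/
theorem stmt_4 (n N : ℕ) (hn : 1 ≤ n)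
    (p : Fin n → ℝ) (hp : ∀ i, 0 < p i ∧ p i < 1) (hps : ∑ i, p i = 1)
    (P : Measure (Fin n)) [IsProbabilityMeasure P]
    (hP : ∀ i : Fin n, P {i} = ENNReal.ofReal (p i))
    (c : Fin n → ℝ) (b : Fin N → Fin n → ℝ)
    (hindep : ∀ (v₀ : ℝ) (v : Fin N → ℝ),
      P ({ω | c ω = v₀} ∩ ⋂ i, {ω | b i ω = v i}) =
        P {ω | c ω = v₀} * ∏ i, P {ω | b i ω = v i})
    (hnc : ∀ i : Fin N, ∃ ω ω' : Fin n, b i ω ≠ b i ω') :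
    (Finset.univ.image c).card * ∏ i, (Finset.univ.image (b i)).card ≤ n := by
  classical
  have hpos : ∀ s : Set (Fin n), s.Nonempty → P s ≠ 0 := by
    rintro s ⟨i, hi⟩ h
    have h0 : P {i} = 0 :=
      le_antisymm (h ▸ measure_mono (Set.singleton_subset_iff.2 hi)) (zero_le)
    rw [hP i, ENNReal.ofReal_eq_zero] at h0
    exact absurd h0 (not_le.2 (hp i).1)
  set f : Fin n → ℝ × (Fin N → ℝ) := fun ω => (c ω, fun i => b i ω) with hf
  have hsub : (Finset.univ.image c) ×ˢ
      (Fintype.piFinset fun i => Finset.univ.image (b i)) ⊆ Finset.univ.image f := by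
    rintro ⟨v₀, v⟩ hx
    rw [Finset.mem_product] at hx
    obtain ⟨h1, h2⟩ := hx
    rw [Fintype.mem_piFinset] at h2
    have hne : ({ω | c ω = v₀} ∩ ⋂ i, {ω | b i ω = v i}).Nonempty := by
      apply MeasureTheory.nonempty_of_measure_ne_zero
      rw [hindep]
      refine mul_ne_zero ?_ ?_
      · apply hpos
        obtain ⟨ω₀, _, hω₀⟩ := Finset.mem_image.1 h1
        exact ⟨ω₀, hω₀⟩
      · rw [Finset.prod_ne_zero_iff]
        intro i _
        apply hpos
        obtain ⟨ωᵢ, _, hωᵢ⟩ := Finset.mem_image.1 (h2 i)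
        exact ⟨ωᵢ, hωᵢ⟩
    obtain ⟨ω, hω⟩ := hne
    obtain ⟨hc, hb⟩ := hω
    rw [Set.mem_iInter] at hb
    apply Finset.mem_image.2
    refine ⟨ω, Finset.mem_univ ω, ?_⟩
    simp only [hf, Prod.ext_iff]
    exact ⟨hc, funext fun i => hb i⟩
  calc (Finset.univ.image c).card * ∏ i, (Finset.univ.image (b i)).card
      = ((Finset.univ.image c) ×ˢ
          (Fintype.piFinset fun i => Finset.univ.image (b i))).card := by
        rw [Finset.card_product, Fintype.card_piFinset]
    _ ≤ (Finset.univ.image f).card := Finset.card_le_card hsub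
    _ ≤ (Finset.univ : Finset (Fin n)).card := Finset.card_image_le
    _ = n := by simp
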